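/- The projection onto the state |α⟩ = |1010...10⟩ (n/2 copies of '10') equals d^{-n/2}·Φ_1Φ_3···Φ_{n-1}, where Φ_i are the path-model representation operators and d = 2cos(π/k): i.e., Φ_1Φ_3···Φ_{n-1} = d^{n/2}·|α⟩⟨α| on the path space H_{n,k}. -/

import Mathlib

open scoped Classical

/-- `λ_ℓ = sin(πℓ/k)` for `ℓ ∈ {1,...,k-1}`, and `0` otherwise. -/
noncomputable def lam (k : ℕ) (m : ℤ) : ℝ :=
  if 1 ≤ m ∧ m ≤ (k : ℤ) - 1 then Real.sin (Real.pi * m / k) else 0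

/-- Read bit `m` of an `n`-bit string (default `false` out of range). -/
def bit {n : ℕ} (x : Fin n → Bool) (m : ℕ) : Bool :=
  if h : m < n then x ⟨m, h⟩ else false

/-- The vertex of the line graph `G_k` reached after the first `i` steps of the
bit string `x` (a `1` is a step right, a `0` a step left), starting at vertex `1`. -/
def ht {n : ℕ} (x : Fin n → Bool) (i : ℕ) : ℤ :=
  1 + ∑ j : Fin n, if (j : ℕ) < i then (if x j then 1 else -1) else 0

/-- `x` encodes a path on `G_k`: it starts at vertex `1` and stays in `{1,...,k-1}`. -/
def validPath (k : ℕ) {n : ℕ} (x : Fin n → Bool) : Prop :=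
  ∀ i : Fin (n + 1), 1 ≤ ht x (i : ℕ) ∧ ht x (i : ℕ) ≤ (k : ℤ) - 1

/-- The path-model operator `Φ_i` (`0`-indexed: it acts on qubits `i, i+1`), as a
matrix on the space spanned by `n`-bit strings.  It is supported on valid paths,
annihilates `|00⟩` and `|11⟩` on qubits `i,i+1`, and acts on the span of `|01⟩,|10⟩`
at height `z` (the vertex reached after the first `i` steps) by the 2×2 matrix with
diagonal `λ_{z-1}/λ_z, λ_{z+1}/λ_z` and off-diagonal `sqrt(λ_{z+1}λ_{z-1})/λ_z`. -/
noncomputable def PhiMat (k n : ℕ) (i : ℕ) : Matrix (Fin n → Bool) (Fin n → Bool) ℂ :=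
  fun x y =>
    if (∀ j : Fin n, (j : ℕ) ≠ i → (j : ℕ) ≠ i + 1 → x j = y j) ∧
        validPath k x ∧ validPath k y then
      (match (bit x i, bit x (i + 1)), (bit y i, bit y (i + 1)) with
        | (false, true), (false, true) =>
            ((lam k (ht y i - 1) / lam k (ht y i) : ℝ) : ℂ)
        | (true, false), (true, false) =>
            ((lam k (ht y i + 1) / lam k (ht y i) : ℝ) : ℂ)
        | (false, true), (true, false) =>
            ((Real.sqrt (lam k (ht y i + 1) * lam k (ht y i - 1)) / lam k (ht y i) : ℝ) : ℂ)
        | (true, false), (false, true) =>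
            ((Real.sqrt (lam k (ht y i + 1) * lam k (ht y i - 1)) / lam k (ht y i) : ℝ) : ℂ)
        | _, _ => (0 : ℂ))
    else 0

/-- The state `|α⟩ = |1010...10⟩` (`1` at even positions, `0` at odd ones). -/
def alphaString (n : ℕ) : Fin n → Bool := fun j => decide ((j : ℕ) % 2 = 0)

lemma lam_zero (k : ℕ) : lam k 0 = 0 := by simp [lam]

lemma lam_one {k : ℕ} (hk : 2 ≤ k) : lam k 1 = Real.sin (Real.pi / k) := by
  have h : (1:ℤ) ≤ (k:ℤ) - 1 := by omega
  simp [lam, h]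

lemma lam_two_div {k : ℕ} (hk : 2 ≤ k) :
    lam k 2 / lam k 1 = 2 * Real.cos (Real.pi / k) := by
  rcases eq_or_lt_of_le hk with h2 | h3
  · have : k = 2 := h2.symm
    subst this
    have : lam 2 2 = 0 := by norm_num [lam]
    rw [this]
    norm_num [Real.cos_pi_div_two]
  · have hk3 : 3 ≤ k := h3
    have h2 : lam k 2 = Real.sin (Real.pi * 2 / k) := by
      have h : (1:ℤ) ≤ 2 ∧ (2:ℤ) ≤ (k:ℤ) - 1 := by constructor <;> omega
      simp [lam, h.1, h.2]
    have hsin : Real.sin (Real.pi / k) ≠ 0 := by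
      apply ne_of_gt
      apply Real.sin_pos_of_pos_of_lt_pi
      · positivity
      · rw [div_lt_iff₀ (by positivity)]
        have hkr : (1:ℝ) < (k:ℝ) := by exact_mod_cast (by omega : 1 < k)
        nlinarith [Real.pi_pos]
    rw [h2, lam_one hk]
    have : Real.pi * 2 / k = 2 * (Real.pi / k) := by ring
    rw [this, Real.sin_two_mul]
    field_simp

lemma ht_zero {n : ℕ} (x : Fin n → Bool) : ht x 0 = 1 := by simp [ht]

lemma ht_succ {n : ℕ} (x : Fin n → Bool) (i : ℕ) (h : i < n) :
    ht x (i+1) = ht x i + (if bit x i then 1 else -1) := by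
  unfold ht
  have key : ∀ j : Fin n, (if (j:ℕ) < i+1 then (if x j then (1:ℤ) else -1) else 0)
      = (if (j:ℕ) < i then (if x j then (1:ℤ) else -1) else 0)
        + (if j = ⟨i,h⟩ then (if x j then (1:ℤ) else -1) else 0) := by
    intro j
    rcases lt_trichotomy (j:ℕ) i with hj | hj | hj
    · have h1 : (j:ℕ) < i + 1 := by omega
      have h2 : j ≠ (⟨i,h⟩ : Fin n) := by
        intro he; rw [he] at hj; simp at hj
      simp [h1, hj, h2]
    · have h1 : (j:ℕ) < i + 1 := by omega
      have h2 : j = (⟨i,h⟩ : Fin n) := by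
        apply Fin.ext; simpa using hj
      simp [h1, hj, h2]
    · have h1 : ¬ ((j:ℕ) < i + 1) := by omega
      have h2 : ¬ ((j:ℕ) < i) := by omega
      have h3 : j ≠ (⟨i,h⟩ : Fin n) := by
        intro he; rw [he] at hj; simp at hj
      simp [h1, h2, h3]
  rw [Finset.sum_congr rfl (fun j _ => key j), Finset.sum_add_distrib,
    Finset.sum_ite_eq' Finset.univ (⟨i,h⟩ : Fin n)]
  simp [bit, h]
  ring

lemma ht_agree {n : ℕ} (x y : Fin n → Bool) (i : ℕ)
    (h : ∀ j : Fin n, (j:ℕ) < i → x j = y j) : ht x i = ht y i := by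
  unfold ht
  congr 1
  apply Finset.sum_congr rfl
  intro j _
  by_cases hj : (j:ℕ) < i
  · simp [hj, h j hj]
  · simp [hj]

lemma ht_pairs {n : ℕ} (x : Fin n → Bool) (t : ℕ) (h2 : 2*t ≤ n)
    (h : ∀ j, j < t → bit x (2*j) = true ∧ bit x (2*j+1) = false) :
    ht x (2*t) = 1 := by
  induction t with
  | zero => simpa using ht_zero x
  | succ t ih =>
    have h1 : 2*t < n := by omega
    have h1' : 2*t+1 < n := by omega
    have e0 : ht x (2*t) = 1 := ih (by omega) (fun j hj => h j (by omega))
    have e1 : ht x (2*t+1) = ht x (2*t) + 1 := by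
      rw [ht_succ x (2*t) h1, (h t (by omega)).1]
      simp
    have e2 : ht x (2*t+2) = ht x (2*t+1) + (-1) := by
      rw [ht_succ x (2*t+1) h1', (h t (by omega)).2]
      simp
    have : 2*(t+1) = 2*t+2 := by ring
    rw [this, e2, e1, e0]
    ring

lemma bit_eq {n : ℕ} (x : Fin n → Bool) (i : ℕ) (h : i < n) : bit x i = x ⟨i,h⟩ := by
  simp [bit, h]

lemma phi_entry (k n t m : ℕ) (hk : 2 ≤ k) (hn : n = 2*m) (htm : t < m)
    (x y : Fin n → Bool)
    (hx : validPath k x) (hpre : ∀ j, j < t → bit x (2*j) = true ∧ bit x (2*j+1) = false) :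
    PhiMat k n (2*t) x y =
      if y = x ∧ bit x (2*t) = true ∧ bit x (2*t+1) = false
      then ((2*Real.cos (Real.pi/k) : ℝ) : ℂ) else 0 := by
  have hlt : 2*t < n := by omega
  have hlt' : 2*t+1 < n := by omega
  unfold PhiMat
  by_cases hcond : (∀ j : Fin n, (j : ℕ) ≠ 2*t → (j : ℕ) ≠ 2*t + 1 → x j = y j) ∧
      validPath k x ∧ validPath k y
  · rw [if_pos hcond]
    obtain ⟨hagree, _, hvy⟩ := hcond
    have hz : ht y (2*t) = 1 := by
      rw [ht_agree y x (2*t) (fun j hj => (hagree j (by omega) (by omega)).symm)]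
      exact ht_pairs x t (by omega) hpre
    have hxy : bit y (2*t) = true → bit y (2*t+1) = false →
        bit x (2*t) = true → bit x (2*t+1) = false → y = x := by
      intro h1 h2 h3 h4
      funext j
      rcases eq_or_ne (j:ℕ) (2*t) with hj | hj
      · have hj' : j = (⟨2*t, hlt⟩ : Fin n) := Fin.ext hj
        rw [hj', ← bit_eq y (2*t) hlt, ← bit_eq x (2*t) hlt, h1, h3]
      · rcases eq_or_ne (j:ℕ) (2*t+1) with hj2 | hj2
        · have hj' : j = (⟨2*t+1, hlt'⟩ : Fin n) := Fin.ext hj2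
          rw [hj', ← bit_eq y (2*t+1) hlt', ← bit_eq x (2*t+1) hlt', h2, h4]
        · exact (hagree j hj hj2).symm
    by_cases hcnd : y = x ∧ bit x (2*t) = true ∧ bit x (2*t+1) = false
    · rw [if_pos hcnd]
      obtain ⟨rfl, h1, h2⟩ := hcnd
      simp only [h1, h2, hz]
      norm_num [lam_two_div hk]
    · rw [if_neg hcnd]
      cases hb1 : bit x (2*t) <;> cases hb2 : bit x (2*t+1) <;>
        cases hb3 : bit y (2*t) <;> cases hb4 : bit y (2*t+1) <;>
        simp only [hb1, hb2, hb3, hb4, hz]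
      all_goals try rfl
      all_goals try norm_num [lam_zero]
      -- remaining: (true,false),(true,false)
      exact absurd ⟨hxy hb3 hb4 hb1 hb2, hb1, hb2⟩ hcnd
  · rw [if_neg hcond]
    rw [if_neg]
    rintro ⟨rfl, _, _⟩
    exact hcond ⟨fun _ _ _ => rfl, hx, hx⟩

lemma prod_entry (k n m : ℕ) (hk : 2 ≤ k) (hn : n = 2*m) (t : ℕ) :
    1 ≤ t → t ≤ m → ∀ x y : Fin n → Bool,
      (((List.range t).map (fun j => PhiMat k n (2*j))).prod) x y =
      (if x = y ∧ validPath k x ∧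
          (∀ j, j < t → bit x (2*j) = true ∧ bit x (2*j+1) = false)
      then ((2*Real.cos (Real.pi/k):ℝ):ℂ)^t else 0) := by
  induction t with
  | zero => omega
  | succ t ih =>
    intro _ htm x y
    rcases Nat.eq_zero_or_pos t with rfl | htpos
    · simp only [List.range_succ, List.range_zero, List.nil_append, List.map_cons, List.map_nil, List.prod_cons,
        List.prod_nil, mul_one]
      by_cases hvx : validPath k x
      · rw [phi_entry k n 0 m hk hn (by omega) x y hvx (by omega)]
        have hiff : (y = x ∧ bit x (2*0) = true ∧ bit x (2*0+1) = false) ↔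
            (x = y ∧ validPath k x ∧
              ∀ j, j < 0+1 → bit x (2*j) = true ∧ bit x (2*j+1) = false) := by
          constructor
          · rintro ⟨rfl, h1, h2⟩
            refine ⟨rfl, hvx, fun j hj => ?_⟩
            have : j = 0 := by omega
            subst this; exact ⟨h1, h2⟩
          · rintro ⟨rfl, _, h⟩
            exact ⟨rfl, h 0 (by omega)⟩
        rw [if_congr hiff rfl rfl]
        norm_num
      · rw [if_neg (by rintro ⟨_, h, _⟩; exact hvx h)]
        unfold PhiMat
        rw [if_neg (by rintro ⟨_, h, _⟩; exact hvx h)]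
    · rw [List.range_succ, List.map_append, List.prod_append]
      simp only [List.map_cons, List.map_nil, List.prod_cons, List.prod_nil, mul_one]
      rw [Matrix.mul_apply]
      by_cases hC : validPath k x ∧
          (∀ j, j < t → bit x (2*j) = true ∧ bit x (2*j+1) = false)
      · have key : ∀ z : Fin n → Bool,
            (((List.range t).map (fun j => PhiMat k n (2*j))).prod) x z
              * PhiMat k n (2*t) z y
            = if x = z then ((2*Real.cos (Real.pi/k):ℝ):ℂ)^t * PhiMat k n (2*t) z y
              else 0 := by
          intro z
          rw [ih htpos (by omega) x z]
          by_cases hz : x = z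
          · rw [if_pos ⟨hz, hC.1, hC.2⟩, if_pos hz]
          · rw [if_neg (by rintro ⟨h, _⟩; exact hz h), if_neg hz, zero_mul]
        rw [Finset.sum_congr rfl (fun z _ => key z), Finset.sum_ite_eq Finset.univ x
          (fun z => ((2*Real.cos (Real.pi/k):ℝ):ℂ)^t * PhiMat k n (2*t) z y),
          if_pos (Finset.mem_univ x)]
        rw [phi_entry k n t m hk hn (by omega) x y hC.1 hC.2]
        by_cases hyx : y = x ∧ bit x (2*t) = true ∧ bit x (2*t+1) = false
        · rw [if_pos hyx]
          have : x = y ∧ validPath k x ∧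
              ∀ j, j < t+1 → bit x (2*j) = true ∧ bit x (2*j+1) = false := by
            refine ⟨hyx.1.symm, hC.1, fun j hj => ?_⟩
            rcases Nat.lt_succ_iff_lt_or_eq.mp hj with h | rfl
            · exact hC.2 j h
            · exact hyx.2
          rw [if_pos this, pow_succ]
        · rw [if_neg hyx, mul_zero, if_neg]
          rintro ⟨rfl, _, hp⟩
          exact hyx ⟨rfl, hp t (by omega)⟩
      · have key : ∀ z : Fin n → Bool,
            (((List.range t).map (fun j => PhiMat k n (2*j))).prod) x z
              * PhiMat k n (2*t) z y = 0 := by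
          intro z
          rw [ih htpos (by omega) x z,
            if_neg (by rintro ⟨_, h1, h2⟩; exact hC ⟨h1, h2⟩), zero_mul]
        rw [Finset.sum_congr rfl (fun z _ => key z), Finset.sum_const_zero,
          if_neg (by rintro ⟨_, h1, h2⟩; exact hC ⟨h1, fun j hj => h2 j (by omega)⟩)]

lemma alpha_pairs (n m : ℕ) (hn : n = 2*m) :
    ∀ j, j < m → bit (alphaString n) (2*j) = true ∧ bit (alphaString n) (2*j+1) = false := by
  intro j hj
  have h1 : 2*j < n := by omega
  have h2 : 2*j+1 < n := by omega
  constructor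
  · rw [bit_eq _ _ h1]; simp [alphaString] <;> omega
  · rw [bit_eq _ _ h2]; simp [alphaString] <;> omega

lemma pairs_to_alpha (n m : ℕ) (hn : n = 2*m) (x : Fin n → Bool)
    (h : ∀ j, j < m → bit x (2*j) = true ∧ bit x (2*j+1) = false) :
    x = alphaString n := by
  funext j
  have hx : x j = bit x (j:ℕ) := by
    rw [bit_eq x (j:ℕ) j.isLt]
  rcases Nat.even_or_odd (j:ℕ) with ⟨q, hq⟩ | ⟨q, hq⟩
  · have hq' : (j:ℕ) = 2*q := by omega
    have hqm : q < m := by have := j.isLt; omega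
    rw [hx, hq', (h q hqm).1]
    simp only [alphaString]
    rw [show ((j:ℕ))%2 = 0 from by omega]
    simp
  · have hqm : q < m := by have := j.isLt; omega
    rw [hx, hq, (h q hqm).2]
    simp only [alphaString]
    rw [show ((j:ℕ))%2 = 1 from by omega]
    simp

/-- for even `n = 2m`, on the path space `H_{n,k}` (vectors supported on
valid paths) the product `Φ_1 Φ_3 ⋯ Φ_{n-1}` (here `0`-indexed: `Φ_0 Φ_2 ⋯ Φ_{n-2}`)
equals `d^{n/2}·|α⟩⟨α|` with `d = 2cos(π/k)`; equivalently `|α⟩⟨α|` is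
`d^{-n/2}·Φ_1Φ_3⋯Φ_{n-1}`. -/
theorem capcup_product_eq_projection (n k m : ℕ) (hk : 2 ≤ k) (hn : n = 2 * m)
    (v : (Fin n → Bool) → ℂ) (hv : ∀ x, ¬ validPath k x → v x = 0) :
    ∀ x : Fin n → Bool,
      (((List.range m).map (fun j => PhiMat k n (2 * j))).prod).mulVec v x =
        if x = alphaString n then
          ((2 * Real.cos (Real.pi / k) : ℝ) : ℂ) ^ m * v (alphaString n)
        else 0 := by
  intro x
  rcases Nat.eq_zero_or_pos m with rfl | hm
  · simp only [List.range_zero, List.map_nil, List.prod_nil, Matrix.one_mulVec]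
    have hx : x = alphaString n := by
      funext j
      exact absurd j.isLt (by omega)
    rw [if_pos hx, pow_zero, one_mul, hx]
  · rw [Matrix.mulVec]
    simp only [dotProduct]
    have hrw : ∀ y : Fin n → Bool,
        (((List.range m).map (fun j => PhiMat k n (2 * j))).prod) x y * v y =
        (if x = y ∧ validPath k x ∧
            (∀ j, j < m → bit x (2*j) = true ∧ bit x (2*j+1) = false)
          then ((2*Real.cos (Real.pi/k):ℝ):ℂ)^m else 0) * v y := by
      intro y
      rw [prod_entry k n m hk hn m hm le_rfl x y]
    rw [Finset.sum_congr rfl (fun y _ => hrw y)]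
    by_cases hC : validPath k x ∧
        (∀ j, j < m → bit x (2*j) = true ∧ bit x (2*j+1) = false)
    · have hxa : x = alphaString n := pairs_to_alpha n m hn x hC.2
      have key : ∀ y : Fin n → Bool,
          (if x = y ∧ validPath k x ∧
              (∀ j, j < m → bit x (2*j) = true ∧ bit x (2*j+1) = false)
            then ((2*Real.cos (Real.pi/k):ℝ):ℂ)^m else 0) * v y =
          if x = y then ((2*Real.cos (Real.pi/k):ℝ):ℂ)^m * v y else 0 := by
        intro y
        by_cases hy : x = y
        · rw [if_pos ⟨hy, hC⟩, if_pos hy]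
        · rw [if_neg (by rintro ⟨h, _⟩; exact hy h), if_neg hy, zero_mul]
      rw [Finset.sum_congr rfl (fun y _ => key y),
        Finset.sum_ite_eq Finset.univ x
          (fun y => ((2*Real.cos (Real.pi/k):ℝ):ℂ)^m * v y),
        if_pos (Finset.mem_univ x), if_pos hxa, hxa]
    · have key : ∀ y : Fin n → Bool,
          (if x = y ∧ validPath k x ∧
              (∀ j, j < m → bit x (2*j) = true ∧ bit x (2*j+1) = false)
            then ((2*Real.cos (Real.pi/k):ℝ):ℂ)^m else 0) * v y = 0 := by
        intro y
        rw [if_neg (by rintro ⟨_, h1, h2⟩; exact hC ⟨h1, h2⟩), zero_mul]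
      rw [Finset.sum_congr rfl (fun y _ => key y), Finset.sum_const_zero]
      by_cases hxa : x = alphaString n
      · rw [if_pos hxa]
        have hva : v (alphaString n) = 0 := by
          apply hv
          intro hval
          exact hC ⟨hxa ▸ hval, fun j hj => hxa ▸ alpha_pairs n m hn j hj⟩
        rw [hva, mul_zero]
      · rw [if_neg hxa]
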